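/- Let K' be obtained from the simplicial complex K by an admissible contraction of v0 onto v1. Then the map φ : C_•(K'; Z/2) → C_•(K; Z/2) is an injective chain map: in every dimension it is injective, and it commutes with the boundary maps. -/
import Mathlib


open Finset

variable {V : Type*} [DecidableEq V]

/-- A (finite) simplicial complex, given by its finite family of faces:
closed under subsets and containing the empty set.  The vertices of `K` are
exactly the elements `v` with `{v} ∈ K`. -/
def IsComplex (K : Finset (Finset V)) : Prop :=
  ∅ ∈ K ∧ ∀ S ∈ K, ∀ T ⊆ S, T ∈ K

/-- The dimension of `K` : the maximum of `|F| - 1` over the faces `F` of `K`. -/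
def dimC (K : Finset (Finset V)) : ℤ :=
  ((K.sup Finset.card : ℕ) : ℤ) - 1

/-- `T` is a missing face of `K` : a set of vertices of `K` which is not a face of `K`
while all its proper subsets are faces of `K`. -/
def IsMissingFace (K : Finset (Finset V)) (T : Finset V) : Prop :=
  (∀ x ∈ T, ({x} : Finset V) ∈ K) ∧ T ∉ K ∧ ∀ S ⊂ T, S ∈ K

/-- The contraction of `u` onto `v` is admissible if no missing face of `K` of
dimension `≤ dim K` contains both `u` and `v`. -/
def Admissible (K : Finset (Finset V)) (u v : V) : Prop :=
  ∀ T : Finset V, IsMissingFace K T → (T.card : ℤ) - 1 ≤ dimC K → ¬(u ∈ T ∧ v ∈ T)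

/-- The contraction of `u` onto `v`:
`K' = {T ∈ K : u ∉ T} ∪ {(T \ {u}) ∪ {v} : u ∈ T ∈ K}`. -/
def contractC (K : Finset (Finset V)) (u v : V) : Finset (Finset V) :=
  K.filter (fun T => u ∉ T) ∪ (K.filter (fun T => u ∈ T)).image (fun T => insert v (T.erase u))

/-- The link of a face: `lk(S,K) = {T ∈ K : T ∩ S = ∅ ∧ T ∪ S ∈ K}`. -/
def linkC (K : Finset (Finset V)) (S : Finset V) : Finset (Finset V) :=
  K.filter (fun T => T ∩ S = ∅ ∧ T ∪ S ∈ K)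

/-- The `m`-skeleton: all faces of dimension at most `m`. -/
def skelC (K : Finset (Finset V)) (m : ℤ) : Finset (Finset V) :=
  K.filter (fun F => (F.card : ℤ) - 1 ≤ m)

/-- The faces of `K` of dimension `n`, i.e. of cardinality `n + 1`. -/
def facesOfDim (K : Finset (Finset V)) (n : ℕ) : Finset (Finset V) :=
  K.filter (fun F => F.card = n + 1)

/-- `C_n(K; ℤ/2)`: the `ℤ/2`-vector space with basis the `n`-dimensional faces of `K`,
realized as the space of `ℤ/2`-valued functions on the `n`-dimensional faces. -/
abbrev Chains (K : Finset (Finset V)) (n : ℕ) : Type _ :=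
  {F : Finset V // F ∈ facesOfDim K n} → ZMod 2

/-- The boundary map `∂ : C_{n+1}(K;ℤ/2) → C_n(K;ℤ/2)`, determined on a basis face `F`
by `∂F = Σ_{x ∈ F} (F \ {x})`.  (The coefficient of `G` in `∂F` is `1` iff `G ⊆ F`,
as `G` and `F` are faces with `|F| = |G| + 1`.) -/
def bdry (K : Finset (Finset V)) (n : ℕ) (c : Chains K (n + 1)) : Chains K n :=
  fun G => ∑ F ∈ (facesOfDim K (n + 1)).attach, if G.1 ⊆ F.1 then c F else 0

/-- `supp φ(F)` for the contraction of `v0` onto `v1` turning `K` into `K'`: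
`{F}` if `F ∈ K`, and `{(F \ {x}) ∪ {v0} : x ∈ F, (F \ {x}) ∪ {v0} ∈ K}` otherwise. -/
def suppPhi (K : Finset (Finset V)) (v0 : V) (F : Finset V) : Finset (Finset V) :=
  if F ∈ K then {F}
  else (F.image fun x => insert v0 (F.erase x)).filter (fun A => A ∈ K)

/-- The chain map `φ : C_•(K';ℤ/2) → C_•(K;ℤ/2)` determined on a basis face `F` of `K'`
by `φ(F) = Σ_{A ∈ supp φ(F)} A`. -/
def phi (K K' : Finset (Finset V)) (v0 : V) (n : ℕ) (c : Chains K' n) : Chains K n :=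
  fun A => ∑ F ∈ (facesOfDim K' n).attach, if A.1 ∈ suppPhi K v0 F.1 then c F else 0

set_option linter.unusedSectionVars false
section Aux

variable {V : Type*} [DecidableEq V]

lemma mem_facesOfDim {K : Finset (Finset V)} {n : ℕ} {F : Finset V} :
    F ∈ facesOfDim K n ↔ F ∈ K ∧ F.card = n + 1 := by
  simp [facesOfDim]

lemma erase_comm' (s : Finset V) (a b : V) : (s.erase a).erase b = (s.erase b).erase a := by
  ext x; simp only [Finset.mem_erase]; tauto

lemma eq_erase_helper {s t : Finset V} (h : t ⊆ s) (hc : s.card = t.card + 1) :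
    ∃ y ∈ s, y ∉ t ∧ t = s.erase y := by
  have h1 : (s \ t).card = 1 := by
    rw [Finset.card_sdiff_of_subset h]; omega
  obtain ⟨y, hy⟩ := Finset.card_eq_one.mp h1
  have hys : y ∈ s ∧ y ∉ t := by
    have : y ∈ s \ t := by rw [hy]; exact Finset.mem_singleton_self y
    simpa [Finset.mem_sdiff] using this
  refine ⟨y, hys.1, hys.2, ?_⟩
  rw [Finset.erase_eq, ← hy, Finset.sdiff_sdiff_self_left,
    Finset.inter_eq_right.mpr h]

lemma mem_contractC_iff (K : Finset (Finset V)) (hK : IsComplex K) (v0 v1 : V) (hne : v0 ≠ v1)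
    (G : Finset V) :
    G ∈ contractC K v0 v1 ↔ v0 ∉ G ∧ (G ∈ K ∨ (v1 ∈ G ∧ insert v0 (G.erase v1) ∈ K)) := by
  unfold contractC
  simp only [Finset.mem_union, Finset.mem_filter, Finset.mem_image]
  constructor
  · rintro (⟨hGK, hG0⟩ | ⟨T, ⟨hTK, hT0⟩, rfl⟩)
    · exact ⟨hG0, Or.inl hGK⟩
    · have hv0 : v0 ∉ insert v1 (T.erase v0) := by
        simp [hne, Finset.mem_erase]
      refine ⟨hv0, ?_⟩
      by_cases hv1T : v1 ∈ T
      · left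
        apply hK.2 T hTK
        intro x hx
        rcases Finset.mem_insert.mp hx with rfl | hx
        · exact hv1T
        · exact Finset.mem_of_mem_erase hx
      · right
        refine ⟨Finset.mem_insert_self _ _, ?_⟩
        have h2 : (insert v1 (T.erase v0)).erase v1 = T.erase v0 :=
          Finset.erase_insert (by simp [Finset.mem_erase, hv1T])
        rw [h2, Finset.insert_erase hT0]
        exact hTK
  · rintro ⟨hv0, hGK | ⟨hv1, hT⟩⟩
    · exact Or.inl ⟨hGK, hv0⟩
    · right
      refine ⟨insert v0 (G.erase v1), ⟨hT, Finset.mem_insert_self _ _⟩, ?_⟩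
      rw [Finset.erase_insert (by simp [Finset.mem_erase, hv0]), Finset.insert_erase hv1]

lemma v0_notMem_of_mem_contractC {K : Finset (Finset V)} (hK : IsComplex K) {v0 v1 : V}
    (hne : v0 ≠ v1) {G : Finset V} (h : G ∈ contractC K v0 v1) : v0 ∉ G :=
  ((mem_contractC_iff K hK v0 v1 hne G).mp h).1

lemma contract_notMem_K {K : Finset (Finset V)} (hK : IsComplex K) {v0 v1 : V}
    (hne : v0 ≠ v1) {G : Finset V} (h : G ∈ contractC K v0 v1) (hG : G ∉ K) :
    v1 ∈ G ∧ insert v0 (G.erase v1) ∈ K := by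
  rcases ((mem_contractC_iff K hK v0 v1 hne G).mp h).2 with h' | h'
  · exact absurd h' hG
  · exact h'

lemma suppPhi_of_mem {K : Finset (Finset V)} {F : Finset V} (v0 : V) (h : F ∈ K) :
    suppPhi K v0 F = {F} := if_pos h

lemma mem_suppPhi_of_notMem {K : Finset (Finset V)} {F : Finset V} (v0 : V) (h : F ∉ K)
    {A : Finset V} :
    A ∈ suppPhi K v0 F ↔ (∃ x ∈ F, A = insert v0 (F.erase x)) ∧ A ∈ K := by
  rw [suppPhi, if_neg h]
  simp only [Finset.mem_filter, Finset.mem_image]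
  constructor
  · rintro ⟨⟨x, hx, rfl⟩, hAK⟩
    exact ⟨⟨x, hx, rfl⟩, hAK⟩
  · rintro ⟨⟨x, hx, rfl⟩, hAK⟩
    exact ⟨⟨x, hx, rfl⟩, hAK⟩

lemma key_glue (K : Finset (Finset V)) (hK : IsComplex K) {v0 v1 : V} (hne : v0 ≠ v1)
    (h0 : ({v0} : Finset V) ∈ K) (h1 : ({v1} : Finset V) ∈ K)
    (hadm : Admissible K v0 v1) (B : Finset V) (hB0 : v0 ∉ B) (hB1 : v1 ∉ B)
    (hBv0 : insert v0 B ∈ K) (hBv1 : insert v1 B ∈ K)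
    (hcard : B.card + 2 ≤ K.sup Finset.card) :
    insert v0 (insert v1 B) ∈ K := by
  by_contra hD
  set D := insert v0 (insert v1 B) with hDdef
  have hDne : (D.powerset.filter (fun S => S ∉ K)).Nonempty :=
    ⟨D, by simp [hD]⟩
  obtain ⟨M, hM, hMmin⟩ := Finset.exists_min_image _ Finset.card hDne
  rw [Finset.mem_filter, Finset.mem_powerset] at hM
  obtain ⟨hMD, hMK⟩ := hM
  have hproper : ∀ S ⊂ M, S ∈ K := by
    intro S hS
    by_contra hSK
    have hmem : S ∈ D.powerset.filter (fun S => S ∉ K) := by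
      rw [Finset.mem_filter, Finset.mem_powerset]
      exact ⟨hS.subset.trans hMD, hSK⟩
    have h2 := hMmin S hmem
    have h3 := Finset.card_lt_card hS
    omega
  have hv0M : v0 ∈ M := by
    by_contra hv0M
    apply hMK
    apply hK.2 _ hBv1
    intro x hx
    have hxD := hMD hx
    rw [hDdef, Finset.mem_insert] at hxD
    rcases hxD with rfl | h
    · exact absurd hx hv0M
    · exact h
  have hv1M : v1 ∈ M := by
    by_contra hv1M
    apply hMK
    apply hK.2 _ hBv0
    intro x hx
    have hxD := hMD hx
    rw [hDdef, Finset.mem_insert, Finset.mem_insert] at hxD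
    rcases hxD with rfl | rfl | h
    · exact Finset.mem_insert_self _ _
    · exact absurd hx hv1M
    · exact Finset.mem_insert_of_mem h
  have hmiss : IsMissingFace K M := by
    refine ⟨?_, hMK, hproper⟩
    intro x hxM
    have hxD := hMD hxM
    rw [hDdef, Finset.mem_insert, Finset.mem_insert] at hxD
    rcases hxD with rfl | rfl | hxB
    · exact h0
    · exact h1
    · exact hK.2 _ hBv0 {x} (by simp [hxB])
  have hdim : (M.card : ℤ) - 1 ≤ dimC K := by
    have hc1 : M.card ≤ D.card := Finset.card_le_card hMD
    have hc2 : D.card ≤ B.card + 2 := by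
      rw [hDdef]
      calc (insert v0 (insert v1 B)).card ≤ (insert v1 B).card + 1 :=
            Finset.card_insert_le _ _
        _ ≤ B.card + 1 + 1 := by
            have := Finset.card_insert_le v1 B; omega
        _ = B.card + 2 := by omega
    rw [dimC]
    have : M.card ≤ K.sup Finset.card := by omega
    omega
  exact hadm M hmiss hdim ⟨hv0M, hv1M⟩

end Aux
section Core

variable {V : Type*} [DecidableEq V]

lemma core_card (K : Finset (Finset V)) (hK : IsComplex K) (v0 v1 : V) (hne : v0 ≠ v1)
    (h0 : ({v0} : Finset V) ∈ K) (h1 : ({v1} : Finset V) ∈ K)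
    (hadm : Admissible K v0 v1) (n : ℕ) (F A : Finset V)
    (hF : F ∈ contractC K v0 v1) (hFc : F.card = n + 2)
    (hA : A ∈ K) (hAc : A.card = n + 1) :
    ((((facesOfDim K (n+1)).filter (fun F' => A ⊆ F' ∧ F' ∈ suppPhi K v0 F)).card : ZMod 2))
      = (((facesOfDim (contractC K v0 v1) n).filter
          (fun G => A ∈ suppPhi K v0 G ∧ G ⊆ F)).card : ZMod 2) := by
  have hv0F : v0 ∉ F := v0_notMem_of_mem_contractC hK hne hF
  by_cases hFK : F ∈ K
  · -- Case 1 : F ∈ K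
    have hSet1 : (facesOfDim K (n+1)).filter (fun F' => A ⊆ F' ∧ F' ∈ suppPhi K v0 F)
        = if A ⊆ F then {F} else ∅ := by
      ext F'
      rw [Finset.mem_filter, mem_facesOfDim, suppPhi_of_mem v0 hFK, Finset.mem_singleton]
      constructor
      · rintro ⟨⟨hF'K, hF'c⟩, hAF', rfl⟩
        rw [if_pos hAF']
        exact Finset.mem_singleton_self _
      · intro h
        split_ifs at h with hAF
        · rw [Finset.mem_singleton] at h; subst h
          exact ⟨⟨hFK, by omega⟩, hAF, rfl⟩
        · exact absurd h (Finset.notMem_empty _)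
    have hSet2 : (facesOfDim (contractC K v0 v1) n).filter
          (fun G => A ∈ suppPhi K v0 G ∧ G ⊆ F)
        = if A ⊆ F then {A} else ∅ := by
      ext G
      rw [Finset.mem_filter]
      constructor
      · rintro ⟨hGf, hAsupp, hGF⟩
        have hGK : G ∈ K := hK.2 F hFK G hGF
        rw [suppPhi_of_mem v0 hGK, Finset.mem_singleton] at hAsupp
        subst hAsupp
        rw [if_pos hGF]
        exact Finset.mem_singleton_self _
      · intro h
        split_ifs at h with hAF
        · rw [Finset.mem_singleton] at h
          rw [h]
          have hv0A : v0 ∉ A := fun h' => hv0F (hAF h')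
          refine ⟨?_, ?_, hAF⟩
          · rw [mem_facesOfDim]
            exact ⟨(mem_contractC_iff K hK v0 v1 hne A).mpr ⟨hv0A, Or.inl hA⟩, hAc⟩
          · rw [suppPhi_of_mem v0 hA]; exact Finset.mem_singleton_self A
        · exact absurd h (Finset.notMem_empty _)
    rw [hSet1, hSet2]
    split_ifs <;> simp
  · -- Case 2 : F ∉ K
    obtain ⟨hv1F, hT0⟩ := contract_notMem_K hK hne hF hFK
    have hScard : (F.erase v1).card = n + 1 := by
      rw [Finset.card_erase_of_mem hv1F]; omega
    have hv0S : v0 ∉ F.erase v1 := fun h => hv0F (Finset.mem_of_mem_erase h)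
    have hT0card : (insert v0 (F.erase v1)).card = n + 2 := by
      rw [Finset.card_insert_of_notMem hv0S]; omega
    have hsup : n + 2 ≤ K.sup Finset.card := by
      have := Finset.le_sup (f := Finset.card) hT0
      omega
    -- key equivalences
    have E1 : ∀ x ∈ F, x ≠ v1 → (insert v0 (F.erase x) ∈ K ↔ F.erase x ∈ K) := by
      intro x hx hxv1
      constructor
      · intro h; exact hK.2 _ h _ (Finset.subset_insert _ _)
      · intro h
        have hv1ex : v1 ∈ F.erase x := Finset.mem_erase.mpr ⟨Ne.symm hxv1, hv1F⟩
        have hsub : (F.erase x).erase v1 ⊆ F.erase v1 := by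
          rw [erase_comm']
          exact Finset.erase_subset _ _
        have h2 : insert v0 ((F.erase x).erase v1) ∈ K :=
          hK.2 _ hT0 _ (Finset.insert_subset_insert _ hsub)
        have hc : ((F.erase x).erase v1).card + 2 ≤ K.sup Finset.card := by
          have e1 := Finset.card_erase_of_mem hv1ex
          have e2 := Finset.card_erase_of_mem hx
          omega
        have h3 := key_glue K hK hne h0 h1 hadm ((F.erase x).erase v1)
          (fun h' => hv0F (Finset.mem_of_mem_erase (Finset.mem_of_mem_erase h')))
          (Finset.notMem_erase _ _) h2 (by rwa [Finset.insert_erase hv1ex]) hc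
        rwa [Finset.insert_erase hv1ex] at h3
    have E2 : ∀ x ∈ F, x ≠ v1 → F.erase x ∈ contractC K v0 v1 := by
      intro x hx hxv1
      rw [mem_contractC_iff K hK v0 v1 hne]
      refine ⟨fun h => hv0F (Finset.mem_of_mem_erase h), Or.inr ⟨?_, ?_⟩⟩
      · exact Finset.mem_erase.mpr ⟨Ne.symm hxv1, hv1F⟩
      · apply hK.2 _ hT0
        apply Finset.insert_subset_insert
        rw [erase_comm']
        exact Finset.erase_subset _ _
    have E3 : F.erase v1 ∈ contractC K v0 v1 ↔ F.erase v1 ∈ K := by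
      rw [mem_contractC_iff K hK v0 v1 hne]
      constructor
      · rintro ⟨h0', h | ⟨hv1', _⟩⟩
        · exact h
        · exact absurd hv1' (Finset.notMem_erase _ _)
      · intro h; exact ⟨hv0S, Or.inl h⟩
    by_cases hv0A : v0 ∈ A
    · -- subcase v0 ∈ A
      set B := A.erase v0 with hBdef
      have hABins : insert v0 B = A := Finset.insert_erase hv0A
      have hBc : B.card = n := by rw [hBdef, Finset.card_erase_of_mem hv0A]; omega
      have hv0B : v0 ∉ B := Finset.notMem_erase _ _
      by_cases hBF : B ⊆ F
      · -- main subcase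
        have hFB2 : (F \ B).card = 2 := by
          rw [Finset.card_sdiff_of_subset hBF]; omega
        set X1 := (F \ B).filter (fun x => insert v0 (F.erase x) ∈ K) with hX1def
        set X2 := (F \ B).filter
          (fun x => F.erase x ∉ K ∧ F.erase x ∈ contractC K v0 v1) with hX2def
        have hSet1 : (facesOfDim K (n+1)).filter (fun F' => A ⊆ F' ∧ F' ∈ suppPhi K v0 F)
            = X1.image (fun x => insert v0 (F.erase x)) := by
          ext F'
          rw [Finset.mem_filter, Finset.mem_image]
          constructor
          · rintro ⟨hface, hAF', hsupp⟩
            rw [mem_suppPhi_of_notMem v0 hFK] at hsupp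
            obtain ⟨⟨x, hxF, rfl⟩, hinsK⟩ := hsupp
            refine ⟨x, Finset.mem_filter.mpr ⟨Finset.mem_sdiff.mpr ⟨hxF, ?_⟩, hinsK⟩, rfl⟩
            intro hxB
            have hxA : x ∈ A := Finset.mem_of_mem_erase hxB
            rcases Finset.mem_insert.mp (hAF' hxA) with h | h
            · exact hv0F (h ▸ hxF)
            · exact Finset.notMem_erase x F h
          · rintro ⟨x, hx, rfl⟩
            rw [Finset.mem_filter, Finset.mem_sdiff] at hx
            obtain ⟨⟨hxF, hxB⟩, hinsK⟩ := hx
            have hv0ex : v0 ∉ F.erase x := fun h => hv0F (Finset.mem_of_mem_erase h)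
            refine ⟨?_, ?_, ?_⟩
            · rw [mem_facesOfDim]
              constructor
              · exact hinsK
              · rw [Finset.card_insert_of_notMem hv0ex, Finset.card_erase_of_mem hxF]
                omega
            · intro a ha
              by_cases hav0 : a = v0
              · subst hav0; exact Finset.mem_insert_self _ _
              · have haB : a ∈ B := Finset.mem_erase.mpr ⟨hav0, ha⟩
                exact Finset.mem_insert_of_mem
                  (Finset.mem_erase.mpr ⟨fun h => hxB (h ▸ haB), hBF haB⟩)
            · rw [mem_suppPhi_of_notMem v0 hFK]
              exact ⟨⟨x, hxF, rfl⟩, hinsK⟩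
        have hSet2 : (facesOfDim (contractC K v0 v1) n).filter
              (fun G => A ∈ suppPhi K v0 G ∧ G ⊆ F)
            = X2.image (fun y => F.erase y) := by
          ext G
          rw [Finset.mem_filter, Finset.mem_image]
          constructor
          · rintro ⟨hGf, hsupp, hGF⟩
            rw [mem_facesOfDim] at hGf
            obtain ⟨hGK', hGc⟩ := hGf
            have hv0G : v0 ∉ G := v0_notMem_of_mem_contractC hK hne hGK'
            by_cases hGK : G ∈ K
            · rw [suppPhi_of_mem v0 hGK, Finset.mem_singleton] at hsupp
              subst hsupp
              exact absurd hv0A hv0G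
            · rw [mem_suppPhi_of_notMem v0 hGK] at hsupp
              obtain ⟨⟨x, hxG, hAeq⟩, -⟩ := hsupp
              have hv0Gex : v0 ∉ G.erase x := fun h => hv0G (Finset.mem_of_mem_erase h)
              have hBeq : B = G.erase x := by
                rw [hBdef, hAeq, Finset.erase_insert hv0Gex]
              obtain ⟨y, hyF, hyG, hGeq⟩ := eq_erase_helper hGF (by omega)
              refine ⟨y, Finset.mem_filter.mpr ⟨Finset.mem_sdiff.mpr ⟨hyF, ?_⟩, ?_, ?_⟩,
                hGeq.symm⟩
              · intro hyB
                exact hyG (Finset.mem_of_mem_erase (hBeq ▸ hyB))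
              · rw [← hGeq]; exact hGK
              · rw [← hGeq]; exact hGK'
          · rintro ⟨y, hy, rfl⟩
            rw [Finset.mem_filter, Finset.mem_sdiff] at hy
            obtain ⟨⟨hyF, hyB⟩, hGnotK, hGK'⟩ := hy
            refine ⟨?_, ?_, Finset.erase_subset _ _⟩
            · rw [mem_facesOfDim]
              exact ⟨hGK', by rw [Finset.card_erase_of_mem hyF]; omega⟩
            · rw [mem_suppPhi_of_notMem v0 hGnotK]
              refine ⟨?_, hA⟩
              have hBsub : B ⊆ F.erase y :=
                fun b hb => Finset.mem_erase.mpr ⟨fun h => hyB (h ▸ hb), hBF hb⟩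
              obtain ⟨x, hxG, hxB, hBeq⟩ := eq_erase_helper hBsub
                (by rw [Finset.card_erase_of_mem hyF]; omega)
              exact ⟨x, hxG, by rw [← hBeq, hABins]⟩
        have hinj1 : Set.InjOn (fun x => insert v0 (F.erase x)) X1 := by
          intro x hx y hy h
          have hxF : x ∈ F := (Finset.mem_sdiff.mp
            (Finset.mem_of_mem_filter x (Finset.mem_coe.mp hx))).1
          have hyF : y ∈ F := (Finset.mem_sdiff.mp
            (Finset.mem_of_mem_filter y (Finset.mem_coe.mp hy))).1
          have hv0ex : v0 ∉ F.erase x := fun h' => hv0F (Finset.mem_of_mem_erase h')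
          have hv0ey : v0 ∉ F.erase y := fun h' => hv0F (Finset.mem_of_mem_erase h')
          have herase : F.erase x = F.erase y := by
            have := congrArg (fun s => Finset.erase s v0) h
            simpa [Finset.erase_insert hv0ex, Finset.erase_insert hv0ey] using this
          by_contra hxy
          have : x ∈ F.erase x := herase ▸ Finset.mem_erase.mpr ⟨hxy, hxF⟩
          exact Finset.notMem_erase x F this
        have hinj2 : Set.InjOn (fun y => F.erase y) X2 := by
          intro x hx y hy h
          have hxF : x ∈ F := (Finset.mem_sdiff.mp
            (Finset.mem_of_mem_filter x (Finset.mem_coe.mp hx))).1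
          by_contra hxy
          have h' : F.erase x = F.erase y := h
          have : x ∈ F.erase x := h' ▸ Finset.mem_erase.mpr ⟨hxy, hxF⟩
          exact Finset.notMem_erase x F this
        have hcompl : X2 = (F \ B) \ X1 := by
          ext x
          simp only [hX1def, hX2def, Finset.mem_filter, Finset.mem_sdiff]
          constructor
          · rintro ⟨⟨hxF, hxB⟩, hp2⟩
            refine ⟨⟨hxF, hxB⟩, ?_⟩
            rintro ⟨-, hcon⟩
            by_cases hxv1 : x = v1
            · subst hxv1; exact hp2.1 (E3.mp hp2.2)
            · exact hp2.1 ((E1 x hxF hxv1).mp hcon)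
          · rintro ⟨⟨hxF, hxB⟩, hp1⟩
            have hp1' : insert v0 (F.erase x) ∉ K := fun hc => hp1 ⟨⟨hxF, hxB⟩, hc⟩
            by_cases hxv1 : x = v1
            · subst hxv1; exact absurd hT0 hp1'
            · exact ⟨⟨hxF, hxB⟩,
                fun hc => hp1' ((E1 x hxF hxv1).mpr hc), E2 x hxF hxv1⟩
        rw [hSet1, hSet2, Finset.card_image_of_injOn hinj1, Finset.card_image_of_injOn hinj2]
        have hX1sub : X1 ⊆ F \ B := Finset.filter_subset _ _
        have hX1le : X1.card ≤ 2 := by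
          have := Finset.card_le_card hX1sub; omega
        have hX2card : X2.card = 2 - X1.card := by
          rw [hcompl, Finset.card_sdiff_of_subset hX1sub, hFB2]
        rw [hX2card]
        have hcc : X1.card = 0 ∨ X1.card = 1 ∨ X1.card = 2 := by omega
        rcases hcc with h | h | h <;> rw [h] <;> decide
      · -- B ⊄ F : both sides empty
        have hSet1 : (facesOfDim K (n+1)).filter (fun F' => A ⊆ F' ∧ F' ∈ suppPhi K v0 F)
            = ∅ := by
          ext F'
          simp only [Finset.mem_filter, Finset.notMem_empty, iff_false, not_and]
          intro hface hAF' hsupp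
          rw [mem_suppPhi_of_notMem v0 hFK] at hsupp
          obtain ⟨⟨x, hxF, hF'eq⟩, -⟩ := hsupp
          subst hF'eq
          apply hBF
          intro b hb
          have hbA : b ∈ A := Finset.mem_of_mem_erase hb
          rcases Finset.mem_insert.mp (hAF' hbA) with h | h
          · exact absurd h (Finset.mem_erase.mp hb).1
          · exact Finset.mem_of_mem_erase h
        have hSet2 : (facesOfDim (contractC K v0 v1) n).filter
              (fun G => A ∈ suppPhi K v0 G ∧ G ⊆ F) = ∅ := by
          ext G
          simp only [Finset.mem_filter, Finset.notMem_empty, iff_false, not_and]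
          intro hGf hsupp hGF
          rw [mem_facesOfDim] at hGf
          have hv0G : v0 ∉ G := v0_notMem_of_mem_contractC hK hne hGf.1
          by_cases hGK : G ∈ K
          · rw [suppPhi_of_mem v0 hGK, Finset.mem_singleton] at hsupp
            subst hsupp
            exact hv0G hv0A
          · rw [mem_suppPhi_of_notMem v0 hGK] at hsupp
            obtain ⟨⟨x, hxG, hAeq⟩, -⟩ := hsupp
            apply hBF
            intro b hb
            have hv0Gex : v0 ∉ G.erase x := fun h => hv0G (Finset.mem_of_mem_erase h)
            have hBeq : B = G.erase x := by
              rw [hBdef, hAeq, Finset.erase_insert hv0Gex]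
            exact hGF (Finset.mem_of_mem_erase (hBeq ▸ hb))
        rw [hSet1, hSet2]
    · -- subcase v0 ∉ A
      have hAins : A ⊆ F → insert v0 A ∈ K := by
        intro hAF
        by_cases hv1A : v1 ∈ A
        · have hsubS : A.erase v1 ⊆ F.erase v1 := Finset.erase_subset_erase _ hAF
          have h2 : insert v0 (A.erase v1) ∈ K :=
            hK.2 _ hT0 _ (Finset.insert_subset_insert _ hsubS)
          have hc : (A.erase v1).card + 2 ≤ K.sup Finset.card := by
            rw [Finset.card_erase_of_mem hv1A]; omega
          have h3 := key_glue K hK hne h0 h1 hadm (A.erase v1)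
            (fun h => hv0A (Finset.mem_of_mem_erase h)) (Finset.notMem_erase _ _)
            h2 (by rwa [Finset.insert_erase hv1A]) hc
          rwa [Finset.insert_erase hv1A] at h3
        · have hsub : A ⊆ F.erase v1 :=
            fun x hx => Finset.mem_erase.mpr ⟨fun h => hv1A (h ▸ hx), hAF hx⟩
          have hAeq : A = F.erase v1 :=
            Finset.eq_of_subset_of_card_le hsub (by omega)
          rw [hAeq]; exact hT0
      have hSet1 : (facesOfDim K (n+1)).filter (fun F' => A ⊆ F' ∧ F' ∈ suppPhi K v0 F)
          = if A ⊆ F then {insert v0 A} else ∅ := by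
        ext F'
        rw [Finset.mem_filter]
        constructor
        · rintro ⟨hface, hAF', hsupp⟩
          rw [mem_suppPhi_of_notMem v0 hFK] at hsupp
          obtain ⟨⟨x, hxF, rfl⟩, hinsK⟩ := hsupp
          have hAsub : A ⊆ F.erase x := by
            intro a ha
            rcases Finset.mem_insert.mp (hAF' ha) with h | h
            · exact absurd (h ▸ ha) hv0A
            · exact h
          have hAeq : A = F.erase x := Finset.eq_of_subset_of_card_le hAsub
            (by rw [Finset.card_erase_of_mem hxF]; omega)
          have hAF : A ⊆ F := hAeq ▸ Finset.erase_subset _ _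
          rw [if_pos hAF, Finset.mem_singleton, hAeq]
        · intro h
          split_ifs at h with hAF
          · rw [Finset.mem_singleton] at h; subst h
            have hKins := hAins hAF
            obtain ⟨x, hxF, hxA, hAeq⟩ := eq_erase_helper hAF (by omega)
            refine ⟨?_, Finset.subset_insert _ _, ?_⟩
            · rw [mem_facesOfDim]
              exact ⟨hKins, by rw [Finset.card_insert_of_notMem hv0A]; omega⟩
            · rw [mem_suppPhi_of_notMem v0 hFK]
              exact ⟨⟨x, hxF, by rw [← hAeq]⟩, hKins⟩
          · exact absurd h (Finset.notMem_empty _)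
      have hSet2 : (facesOfDim (contractC K v0 v1) n).filter
            (fun G => A ∈ suppPhi K v0 G ∧ G ⊆ F)
          = if A ⊆ F then {A} else ∅ := by
        ext G
        rw [Finset.mem_filter]
        constructor
        · rintro ⟨hGf, hsupp, hGF⟩
          by_cases hGK : G ∈ K
          · rw [suppPhi_of_mem v0 hGK, Finset.mem_singleton] at hsupp
            subst hsupp
            rw [if_pos hGF]
            exact Finset.mem_singleton_self _
          · rw [mem_suppPhi_of_notMem v0 hGK] at hsupp
            obtain ⟨⟨x, hxG, hAeq⟩, -⟩ := hsupp
            exact absurd (hAeq ▸ Finset.mem_insert_self v0 (G.erase x)) hv0A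
        · intro h
          split_ifs at h with hAF
          · rw [Finset.mem_singleton] at h
            rw [h]
            refine ⟨?_, ?_, hAF⟩
            · rw [mem_facesOfDim]
              exact ⟨(mem_contractC_iff K hK v0 v1 hne A).mpr ⟨hv0A, Or.inl hA⟩, hAc⟩
            · rw [suppPhi_of_mem v0 hA]
              exact Finset.mem_singleton_self _
          · exact absurd h (Finset.notMem_empty _)
      rw [hSet1, hSet2]
      split_ifs <;> simp

end Core
section Main

variable {V : Type*} [DecidableEq V]

/-- Auxiliary: a canonical preimage witness for injectivity of `φ`. -/
def rhoAux (K : Finset (Finset V)) (v0 v1 : V) (F : Finset V) : Finset V :=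
  if F ∈ K then F else insert v0 (F.erase v1)

lemma rhoAux_spec (K : Finset (Finset V)) (hK : IsComplex K) (v0 v1 : V) (hne : v0 ≠ v1)
    {n : ℕ} {F : Finset V} (hF : F ∈ contractC K v0 v1) (hFc : F.card = n + 1) :
    rhoAux K v0 v1 F ∈ facesOfDim K n ∧ rhoAux K v0 v1 F ∈ suppPhi K v0 F ∧
      ∀ G ∈ contractC K v0 v1, rhoAux K v0 v1 F ∈ suppPhi K v0 G → G = F := by
  have hv0F : v0 ∉ F := v0_notMem_of_mem_contractC hK hne hF
  by_cases hFK : F ∈ K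
  · rw [rhoAux, if_pos hFK]
    refine ⟨mem_facesOfDim.mpr ⟨hFK, hFc⟩, ?_, ?_⟩
    · rw [suppPhi_of_mem v0 hFK]; exact Finset.mem_singleton_self _
    · intro G hG hsupp
      have hv0G : v0 ∉ G := v0_notMem_of_mem_contractC hK hne hG
      by_cases hGK : G ∈ K
      · rw [suppPhi_of_mem v0 hGK, Finset.mem_singleton] at hsupp
        exact hsupp.symm
      · rw [mem_suppPhi_of_notMem v0 hGK] at hsupp
        obtain ⟨⟨x, hxG, hFeq⟩, -⟩ := hsupp
        exact absurd (hFeq ▸ Finset.mem_insert_self v0 (G.erase x)) hv0F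
  · obtain ⟨hv1F, hT0⟩ := contract_notMem_K hK hne hF hFK
    rw [rhoAux, if_neg hFK]
    have hv0S : v0 ∉ F.erase v1 := fun h => hv0F (Finset.mem_of_mem_erase h)
    refine ⟨?_, ?_, ?_⟩
    · rw [mem_facesOfDim]
      refine ⟨hT0, ?_⟩
      rw [Finset.card_insert_of_notMem hv0S, Finset.card_erase_of_mem hv1F]
      omega
    · rw [mem_suppPhi_of_notMem v0 hFK]
      exact ⟨⟨v1, hv1F, rfl⟩, hT0⟩
    · intro G hG hsupp
      have hv0G : v0 ∉ G := v0_notMem_of_mem_contractC hK hne hG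
      by_cases hGK : G ∈ K
      · rw [suppPhi_of_mem v0 hGK, Finset.mem_singleton] at hsupp
        exact absurd (hsupp ▸ Finset.mem_insert_self v0 (F.erase v1)) hv0G
      · rw [mem_suppPhi_of_notMem v0 hGK] at hsupp
        obtain ⟨⟨x, hxG, hGeq⟩, -⟩ := hsupp
        obtain ⟨hv1G, -⟩ := contract_notMem_K hK hne hG hGK
        have hv0Gex : v0 ∉ G.erase x := fun h => hv0G (Finset.mem_of_mem_erase h)
        have herase : F.erase v1 = G.erase x := by
          have := congrArg (fun s => Finset.erase s v0) hGeq
          simpa [Finset.erase_insert hv0S, Finset.erase_insert hv0Gex] using this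
        by_cases hxv1 : x = v1
        · rw [hxv1] at herase
          calc G = insert v1 (G.erase v1) := (Finset.insert_erase hv1G).symm
            _ = insert v1 (F.erase v1) := by rw [herase]
            _ = F := Finset.insert_erase hv1F
        · exfalso
          have : v1 ∈ G.erase x := Finset.mem_erase.mpr ⟨Ne.symm hxv1, hv1G⟩
          rw [← herase] at this
          exact Finset.notMem_erase v1 F this

lemma sum_if_count {α : Type*} [DecidableEq α] (s : Finset α) (p : α → Prop)
    [DecidablePred p] (m : ZMod 2) :
    (∑ x ∈ s, if p x then m else 0) = ((s.filter p).card : ZMod 2) * m := by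
  rw [← Finset.sum_filter, Finset.sum_const, nsmul_eq_mul]

end Main
section Thm

variable {V : Type*} [DecidableEq V]

lemma ite_sum_zero {ι M : Type*} [AddCommMonoid M] (p : Prop) [Decidable p]
    (s : Finset ι) (f : ι → M) (q : ι → Prop) [DecidablePred q] :
    (if p then (∑ i ∈ s, if q i then f i else 0) else 0)
      = ∑ i ∈ s, if p ∧ q i then f i else 0 := by
  split_ifs with hp
  · exact Finset.sum_congr rfl fun i _ => by simp [hp]
  · exact (Finset.sum_eq_zero fun i _ => by simp [hp]).symm

theorem phi_injective_chain_map'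
    (K : Finset (Finset V)) (hK : IsComplex K) (v0 v1 : V) (hne : v0 ≠ v1)
    (h0 : ({v0} : Finset V) ∈ K) (h1 : ({v1} : Finset V) ∈ K)
    (hadm : Admissible K v0 v1) :
    (∀ n : ℕ, Function.Injective (phi K (contractC K v0 v1) v0 n)) ∧
    (∀ n : ℕ, IsLinearMap (ZMod 2) (phi K (contractC K v0 v1) v0 n)) ∧
    (∀ (n : ℕ) (c : Chains (contractC K v0 v1) (n + 1)),
      bdry K n (phi K (contractC K v0 v1) v0 (n + 1) c) =
        phi K (contractC K v0 v1) v0 n (bdry (contractC K v0 v1) n c)) := by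
  refine ⟨?_, ?_, ?_⟩
  · -- injectivity
    intro n c c' h
    funext F
    obtain ⟨hFmem, hFc⟩ := mem_facesOfDim.mp F.2
    obtain ⟨hrho, hrhosupp, hrhouniq⟩ := rhoAux_spec K hK v0 v1 hne hFmem hFc
    have key : ∀ d : Chains (contractC K v0 v1) n,
        phi K (contractC K v0 v1) v0 n d ⟨rhoAux K v0 v1 F.1, hrho⟩ = d F := by
      intro d
      show (∑ G ∈ (facesOfDim (contractC K v0 v1) n).attach,
          if rhoAux K v0 v1 F.1 ∈ suppPhi K v0 G.1 then d G else 0) = d F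
      rw [Finset.sum_eq_single F]
      · rw [if_pos]
        exact hrhosupp
      · intro G _ hGF
        rw [if_neg]
        intro hmem
        obtain ⟨hGmem, hGc⟩ := mem_facesOfDim.mp G.2
        exact hGF (Subtype.ext (hrhouniq G.1 hGmem hmem))
      · intro hFnot
        exact absurd (Finset.mem_attach _ F) hFnot
    have h2 := congrFun h ⟨rhoAux K v0 v1 F.1, hrho⟩
    rw [key c, key c'] at h2
    exact h2
  · -- linearity
    intro n
    refine ⟨fun c c' => ?_, fun m c => ?_⟩
    · funext A
      show (∑ G ∈ (facesOfDim (contractC K v0 v1) n).attach,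
          if A.1 ∈ suppPhi K v0 G.1 then (c + c') G else 0)
        = (∑ G ∈ (facesOfDim (contractC K v0 v1) n).attach,
            if A.1 ∈ suppPhi K v0 G.1 then c G else 0)
          + ∑ G ∈ (facesOfDim (contractC K v0 v1) n).attach,
              if A.1 ∈ suppPhi K v0 G.1 then c' G else 0
      rw [← Finset.sum_add_distrib]
      refine Finset.sum_congr rfl fun G _ => ?_
      split_ifs <;> simp
    · funext A
      show (∑ G ∈ (facesOfDim (contractC K v0 v1) n).attach,
          if A.1 ∈ suppPhi K v0 G.1 then (m • c) G else 0)
        = m • ∑ G ∈ (facesOfDim (contractC K v0 v1) n).attach,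
            if A.1 ∈ suppPhi K v0 G.1 then c G else 0
      rw [smul_eq_mul, Finset.mul_sum]
      refine Finset.sum_congr rfl fun G _ => ?_
      split_ifs <;> simp
  · -- chain map
    intro n c
    funext A
    obtain ⟨hAmem, hAc⟩ := mem_facesOfDim.mp A.2
    show (∑ F' ∈ (facesOfDim K (n + 1)).attach,
        if A.1 ⊆ F'.1 then phi K (contractC K v0 v1) v0 (n + 1) c F' else 0)
      = ∑ G ∈ (facesOfDim (contractC K v0 v1) n).attach,
          if A.1 ∈ suppPhi K v0 G.1 then bdry (contractC K v0 v1) n c G else 0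
    calc (∑ F' ∈ (facesOfDim K (n + 1)).attach,
            if A.1 ⊆ F'.1 then phi K (contractC K v0 v1) v0 (n + 1) c F' else 0)
        = ∑ F' ∈ (facesOfDim K (n + 1)).attach,
            ∑ F ∈ (facesOfDim (contractC K v0 v1) (n + 1)).attach,
              if A.1 ⊆ F'.1 ∧ F'.1 ∈ suppPhi K v0 F.1 then c F else 0 := by
          refine Finset.sum_congr rfl fun F' _ => ?_
          exact ite_sum_zero (A.1 ⊆ F'.1) _ c (fun F => F'.1 ∈ suppPhi K v0 F.1)
      _ = ∑ F ∈ (facesOfDim (contractC K v0 v1) (n + 1)).attach,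
            ∑ F' ∈ (facesOfDim K (n + 1)).attach,
              if A.1 ⊆ F'.1 ∧ F'.1 ∈ suppPhi K v0 F.1 then c F else 0 :=
          Finset.sum_comm
      _ = ∑ F ∈ (facesOfDim (contractC K v0 v1) (n + 1)).attach,
            (((facesOfDim K (n + 1)).filter
              (fun F' => A.1 ⊆ F' ∧ F' ∈ suppPhi K v0 F.1)).card : ZMod 2) * c F := by
          refine Finset.sum_congr rfl fun F _ => ?_
          rw [Finset.sum_attach (facesOfDim K (n + 1))
            (fun y => if A.1 ⊆ y ∧ y ∈ suppPhi K v0 F.1 then c F else 0)]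
          exact sum_if_count _ _ _
      _ = ∑ F ∈ (facesOfDim (contractC K v0 v1) (n + 1)).attach,
            (((facesOfDim (contractC K v0 v1) n).filter
              (fun G => A.1 ∈ suppPhi K v0 G ∧ G ⊆ F.1)).card : ZMod 2) * c F := by
          refine Finset.sum_congr rfl fun F _ => ?_
          obtain ⟨hFmem, hFc⟩ := mem_facesOfDim.mp F.2
          rw [core_card K hK v0 v1 hne h0 h1 hadm n F.1 A.1 hFmem (by omega) hAmem hAc]
      _ = ∑ G ∈ (facesOfDim (contractC K v0 v1) n).attach,
            if A.1 ∈ suppPhi K v0 G.1 then bdry (contractC K v0 v1) n c G else 0 := by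
          symm
          calc (∑ G ∈ (facesOfDim (contractC K v0 v1) n).attach,
                  if A.1 ∈ suppPhi K v0 G.1 then bdry (contractC K v0 v1) n c G else 0)
              = ∑ G ∈ (facesOfDim (contractC K v0 v1) n).attach,
                  ∑ F ∈ (facesOfDim (contractC K v0 v1) (n + 1)).attach,
                    if A.1 ∈ suppPhi K v0 G.1 ∧ G.1 ⊆ F.1 then c F else 0 := by
                refine Finset.sum_congr rfl fun G _ => ?_
                exact ite_sum_zero (A.1 ∈ suppPhi K v0 G.1) _ c (fun F => G.1 ⊆ F.1)
            _ = ∑ F ∈ (facesOfDim (contractC K v0 v1) (n + 1)).attach,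
                  ∑ G ∈ (facesOfDim (contractC K v0 v1) n).attach,
                    if A.1 ∈ suppPhi K v0 G.1 ∧ G.1 ⊆ F.1 then c F else 0 :=
                Finset.sum_comm
            _ = ∑ F ∈ (facesOfDim (contractC K v0 v1) (n + 1)).attach,
                  (((facesOfDim (contractC K v0 v1) n).filter
                    (fun G => A.1 ∈ suppPhi K v0 G ∧ G ⊆ F.1)).card : ZMod 2) * c F := by
                refine Finset.sum_congr rfl fun F _ => ?_
                rw [Finset.sum_attach (facesOfDim (contractC K v0 v1) n)
                  (fun y => if A.1 ∈ suppPhi K v0 y ∧ y ⊆ F.1 then c F else 0)]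
                exact sum_if_count _ _ _

end Thm
/-- For an admissible contraction of `v0` onto `v1` turning `K` into `K'`,
the map `φ : C_•(K';ℤ/2) → C_•(K;ℤ/2)` is an injective chain map: in every dimension it is
(linear and) injective, and it commutes with the boundary maps. -/
theorem phi_injective_chain_map
    (K : Finset (Finset V)) (hK : IsComplex K) (v0 v1 : V) (hne : v0 ≠ v1)
    (h0 : ({v0} : Finset V) ∈ K) (h1 : ({v1} : Finset V) ∈ K)
    (hadm : Admissible K v0 v1) :
    (∀ n : ℕ, Function.Injective (phi K (contractC K v0 v1) v0 n)) ∧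
    (∀ n : ℕ, IsLinearMap (ZMod 2) (phi K (contractC K v0 v1) v0 n)) ∧
    (∀ (n : ℕ) (c : Chains (contractC K v0 v1) (n + 1)),
      bdry K n (phi K (contractC K v0 v1) v0 (n + 1) c) =
        phi K (contractC K v0 v1) v0 n (bdry (contractC K v0 v1) n c)) := by
  exact phi_injective_chain_map' K hK v0 v1 hne h0 h1 hadm
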